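/- In the optimal-menu instance reduced from 3-partition, if the optimal menus are disjoint, customers have outside option v_0 > 0, supplier outside options are all 0, supplier values satisfy ∑_{j} v_j = 1, and a menu profile assigns customer i a disjoint set M_i with mass α_i = ∑_{j ∈ M_i} v_j, then the expected number of matches equals ∑_{i=1}^m α_i/(v_0+α_i) ≤ m/(m·v_0+1), with equality if and only if α_i = 1/m for all i (when such balanced menus are feasible). -/

import Mathlib

open Finset

/-- In the 3-partition reduction: supplier values `v j > 0` sum to `1`, suppliers have
    zero outside options, customers have outside option `v₀ > 0`, and the menus
    `M i` are pairwise disjoint.  With `α i = ∑_{j ∈ M i} v j`, the expected number of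
    matches equals `∑ i, α i/(v₀ + α i)`, which is at most `m/(m·v₀+1)`, with equality
    iff `α i = 1/m` for all `i` (balanced menus). -/
theorem disjoint_menus_balanced (N m : ℕ) (hm : 1 ≤ m)
    (v : Fin N → ℝ) (hv : ∀ j, 0 < v j) (hsum : ∑ j, v j = 1)
    (v0 : ℝ) (hv0 : 0 < v0)
    (M : Fin m → Finset (Fin N))
    (hdisj : ∀ i i', i ≠ i' → Disjoint (M i) (M i')) :
    (∑ i, (∑ j ∈ M i, v j) / (v0 + ∑ j ∈ M i, v j)) ≤ (m : ℝ) / (m * v0 + 1) ∧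
      ((∑ i, (∑ j ∈ M i, v j) / (v0 + ∑ j ∈ M i, v j)) = (m : ℝ) / (m * v0 + 1) ↔
        ∀ i, (∑ j ∈ M i, v j) = 1 / m) := by
  have hm0 : (0:ℝ) < m := by exact_mod_cast Nat.lt_of_lt_of_le Nat.zero_lt_one hm
  set t : ℝ := 1 / m with ht
  have ht0 : 0 < t := by positivity
  set a : Fin m → ℝ := fun i => ∑ j ∈ M i, v j with ha
  have ha0 : ∀ i, 0 ≤ a i := fun i => Finset.sum_nonneg fun j _ => (hv j).le
  have hden : ∀ i, 0 < v0 + a i := fun i => by have := ha0 i; linarith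
  have hdt : 0 < v0 + t := by linarith
  -- total mass at most 1
  have hS : ∑ i, a i ≤ 1 := by
    have hpd : ((Finset.univ : Finset (Fin m)) : Set (Fin m)).PairwiseDisjoint M := by
      intro i _ i' _ hne
      exact hdisj i i' hne
    calc ∑ i, a i = ∑ j ∈ Finset.univ.biUnion M, v j := (Finset.sum_biUnion hpd).symm
      _ ≤ ∑ j, v j := Finset.sum_le_sum_of_subset_of_nonneg (Finset.subset_univ _)
          (fun j _ _ => (hv j).le)
      _ = 1 := hsum
  -- tangent-line identity
  have key : ∀ x : ℝ, 0 ≤ x →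
      x / (v0 + x) = t / (v0 + t) + v0 / (v0 + t)^2 * (x - t)
        - v0 * (x - t)^2 / ((v0 + x) * (v0 + t)^2) := by
    intro x hx
    have h1 : v0 + x ≠ 0 := by positivity
    have h2 : v0 + t ≠ 0 := ne_of_gt hdt
    field_simp
    ring
  set D : Fin m → ℝ := fun i => v0 * (a i - t)^2 / ((v0 + a i) * (v0 + t)^2) with hD
  have hD0 : ∀ i, 0 ≤ D i := fun i => by
    have := hden i
    positivity
  have hmt : (m : ℝ) * t = 1 := by
    rw [ht]; field_simp [hm0.ne']
  have hmg : (m : ℝ) * (t / (v0 + t)) = (m : ℝ) / (m * v0 + 1) := by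
    rw [ht]
    have : (m : ℝ) ≠ 0 := ne_of_gt hm0
    have h2 : v0 + 1 / m ≠ 0 := ne_of_gt hdt
    have h3 : (m : ℝ) * v0 + 1 ≠ 0 := by nlinarith
    field_simp
  -- central decomposition
  have hdecomp : ∑ i, a i / (v0 + a i)
      = (m : ℝ) / (m * v0 + 1) + v0 / (v0 + t)^2 * ((∑ i, a i) - 1) - ∑ i, D i := by
    have : ∑ i, a i / (v0 + a i)
        = ∑ i, (t / (v0 + t) + v0 / (v0 + t)^2 * (a i - t) - D i) :=
      Finset.sum_congr rfl fun i _ => key (a i) (ha0 i)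
    rw [this, Finset.sum_sub_distrib, Finset.sum_add_distrib, ← Finset.mul_sum,
      Finset.sum_sub_distrib, Finset.sum_const, Finset.sum_const, Finset.card_univ,
      Fintype.card_fin, nsmul_eq_mul, nsmul_eq_mul, hmg, hmt]
  have hc : 0 < v0 / (v0 + t)^2 := by positivity
  have hDsum : 0 ≤ ∑ i, D i := Finset.sum_nonneg fun i _ => hD0 i
  have hslack : v0 / (v0 + t)^2 * ((∑ i, a i) - 1) ≤ 0 := by
    have h1 : (∑ i, a i) - 1 ≤ 0 := by linarith
    exact mul_nonpos_of_nonneg_of_nonpos hc.le h1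
  constructor
  · linarith [hdecomp]
  · constructor
    · intro heq
      -- both nonneg terms must vanish
      have hzero : v0 / (v0 + t)^2 * (1 - ∑ i, a i) + ∑ i, D i = 0 := by
        have : v0 / (v0 + t)^2 * ((∑ i, a i) - 1)
            = -(v0 / (v0 + t)^2 * (1 - ∑ i, a i)) := by ring
        rw [hdecomp, this] at heq
        linarith
      have h1 : 0 ≤ v0 / (v0 + t)^2 * (1 - ∑ i, a i) := by
        have : 0 ≤ 1 - ∑ i, a i := by linarith
        positivity
      have hDz : ∑ i, D i = 0 := by linarith
      have hDeach : ∀ i ∈ Finset.univ, D i = 0 :=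
        (Finset.sum_eq_zero_iff_of_nonneg fun i _ => hD0 i).mp hDz
      intro i
      have hDi := hDeach i (Finset.mem_univ i)
      have hdenpos : 0 < (v0 + a i) * (v0 + t)^2 := by
        have := hden i; positivity
      have hnum : v0 * (a i - t)^2 = 0 := by
        have := (div_eq_zero_iff.mp hDi)
        rcases this with h | h
        · exact h
        · exact absurd h (ne_of_gt hdenpos)
      have : (a i - t)^2 = 0 := by
        rcases mul_eq_zero.mp hnum with h | h
        · exact absurd h (ne_of_gt hv0)
        · exact h
      have : a i - t = 0 := by
        exact pow_eq_zero_iff (by norm_num) |>.mp this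
      show a i = 1 / m
      rw [← ht]; linarith
    · intro hall
      have hai : ∀ i, a i = t := fun i => by rw [ht]; exact hall i
      have hSa : ∑ i, a i = 1 := by
        rw [Finset.sum_congr rfl fun i _ => hai i, Finset.sum_const, Finset.card_univ,
          Fintype.card_fin, nsmul_eq_mul, hmt]
      have hDz : ∀ i, D i = 0 := fun i => by
        simp [hD, hai i]
      rw [hdecomp, hSa, Finset.sum_congr rfl fun i _ => hDz i, Finset.sum_const]
      simp
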